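/- Let G be a purely non-abelian finite p-group. Then the group Autcent(G) of central automorphisms of G has order equal to |Hom(G/γ_2(G), Z(G))|. -/

import Mathlib

/-- A group is purely non-abelian if it has no nontrivial abelian (normal) direct factor. -/
def PurelyNonabelian (G : Type*) [Group G] : Prop :=
  ∀ H K : Subgroup G, H.Normal → K.Normal → IsMulCommutative H →
    Disjoint H K → H ⊔ K = ⊤ → H = ⊥

private theorem exists_idem_pow {M : Type*} [Monoid M] [Finite M] (x : M) :
    ∃ n > 0, x ^ n * x ^ n = x ^ n := by
  obtain ⟨a, b, hab, h⟩ := Finite.exists_ne_map_eq_of_infinite (fun n : ℕ => x ^ n)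
  wlog hlt : a < b generalizing a b
  · exact this b a hab.symm h.symm (by omega)
  set d := b - a with hd
  have hd0 : 0 < d := by omega
  have hstep : ∀ m, a ≤ m → x ^ (m + d) = x ^ m := by
    intro m hm
    have h1 : m + d = (m - a) + b := by omega
    have h2 : m = (m - a) + a := by omega
    rw [h1, pow_add, ← h, ← pow_add, ← h2]
  have key : ∀ k m, a ≤ m → x ^ (m + k * d) = x ^ m := by
    intro k
    induction k with
    | zero => simp
    | succ k ih =>
      intro m hm
      have h1 : m + (k + 1) * d = (m + d) + k * d := by ring
      rw [h1, ih _ (by omega), hstep _ hm]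
  refine ⟨d * (a + 1), by positivity, ?_⟩
  rw [← pow_add]
  have h2 : d * (a + 1) + d * (a + 1) = d * (a + 1) + (a + 1) * d := by ring
  rw [h2, key (a + 1) _ (by nlinarith)]

section Aux

variable {G : Type*} [Group G]

/-- the property of an endomorphism being "central". -/
private def IsCentralEnd (σ : Monoid.End G) : Prop :=
  ∀ g : G, g⁻¹ * σ g ∈ Subgroup.center G

private theorem isCentralEnd_one : IsCentralEnd (1 : Monoid.End G) := by
  intro g; simpa using Subgroup.one_mem _

private theorem isCentralEnd_mul {σ τ : Monoid.End G} (hσ : IsCentralEnd σ)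
    (hτ : IsCentralEnd τ) : IsCentralEnd (σ * τ) := by
  intro g
  have hz : g⁻¹ * τ g ∈ Subgroup.center G := hτ g
  have hτg : τ g = g * (g⁻¹ * τ g) := by group
  have h1 : (σ * τ) g = σ g * σ (g⁻¹ * τ g) := by
    show σ (τ g) = _
    rw [hτg, map_mul, ← hτg]
  have hσz : σ (g⁻¹ * τ g) ∈ Subgroup.center G := by
    have : σ (g⁻¹ * τ g) = (g⁻¹ * τ g) * ((g⁻¹ * τ g)⁻¹ * σ (g⁻¹ * τ g)) := by group
    rw [this]
    exact Subgroup.mul_mem _ hz (hσ _)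
  have : g⁻¹ * (σ * τ) g = (g⁻¹ * σ g) * σ (g⁻¹ * τ g) := by
    rw [h1]; group
  rw [this]
  exact Subgroup.mul_mem _ (hσ g) hσz

private theorem isCentralEnd_pow {σ : Monoid.End G} (hσ : IsCentralEnd σ) (n : ℕ) :
    IsCentralEnd (σ ^ n) := by
  induction n with
  | zero => simpa using isCentralEnd_one
  | succ n ih => rw [pow_succ]; exact isCentralEnd_mul ih hσ

/-- the endomorphism `g ↦ g * f g` attached to a central homomorphism `f`. -/
private def sigmaEnd (f : G →* Subgroup.center G) : Monoid.End G where
  toFun g := g * (f g : G)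
  map_one' := by simp
  map_mul' a b := by
    have hc : ∀ x : G, (f a : G) * x = x * (f a : G) :=
      fun x => (Subgroup.mem_center_iff.mp (f a).2 x).symm
    simp only [map_mul, Subgroup.coe_mul]
    have h2 : (f a : G) * (b * (f b : G)) = b * ((f a : G) * (f b : G)) := by
      rw [← mul_assoc, hc b, mul_assoc]
    rw [mul_assoc a (f a : G) (b * (f b : G)), h2, ← mul_assoc a b]

private theorem sigmaEnd_apply (f : G →* Subgroup.center G) (g : G) :
    sigmaEnd f g = g * (f g : G) := rfl

private theorem isCentralEnd_sigmaEnd (f : G →* Subgroup.center G) :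
    IsCentralEnd (sigmaEnd f) := by
  intro g
  rw [sigmaEnd_apply, inv_mul_cancel_left]
  exact (f g).2

private theorem sigmaEnd_bijective [Finite G] (hpna : PurelyNonabelian G)
    (f : G →* Subgroup.center G) : Function.Bijective (sigmaEnd f) := by
  set σ := sigmaEnd f with hσdef
  haveI : Finite (Monoid.End G) := Finite.of_injective _ DFunLike.coe_injective
  obtain ⟨n, hn0, hidem⟩ := exists_idem_pow σ
  set π := σ ^ n with hπdef
  have hπC : IsCentralEnd π := isCentralEnd_pow (isCentralEnd_sigmaEnd f) n
  have hidem' : ∀ g, π (π g) = π g := fun g => by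
    conv_rhs => rw [← hidem]
    rfl
  -- H = ker π is central
  have hker_central : ∀ x : G, x ∈ π.ker → x ∈ Subgroup.center G := by
    intro x hx
    have h1 : x⁻¹ * π x ∈ Subgroup.center G := hπC x
    rw [show π x = 1 from MonoidHom.mem_ker.mp hx, mul_one] at h1
    simpa using Subgroup.inv_mem _ h1
  have hHn : (π.ker).Normal := inferInstance
  have hKn : (π.range).Normal := by
    constructor
    intro x hx g
    obtain ⟨y, rfl⟩ := MonoidHom.mem_range.mp hx
    have hz : g⁻¹ * π g ∈ Subgroup.center G := hπC g
    have hg : π g = g * (g⁻¹ * π g) := by group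
    have : g * π y * g⁻¹ = π (g * y * g⁻¹) := by
      have hcom : ∀ w : G, (g⁻¹ * π g) * w = w * (g⁻¹ * π g) :=
        fun w => (Subgroup.mem_center_iff.mp hz w).symm
      rw [map_mul, map_mul, hg]
      rw [mul_assoc g (g⁻¹ * π g) (π y), hcom (π y), ← mul_assoc]
      rw [map_inv, hg, mul_inv_rev, mul_inv_rev]
      group
    exact this ▸ MonoidHom.mem_range.mpr ⟨g * y * g⁻¹, rfl⟩
  have hHc : IsMulCommutative (π.ker) := by
    refine ⟨⟨fun a b => ?_⟩⟩
    exact Subtype.ext (Subgroup.mem_center_iff.mp (hker_central a a.2) b).symm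
  have hdisj : Disjoint π.ker π.range := by
    rw [Subgroup.disjoint_def]
    intro x hx hx'
    obtain ⟨y, rfl⟩ := MonoidHom.mem_range.mp hx'
    exact (hidem' y).symm.trans (MonoidHom.mem_ker.mp hx)
  have hsup : π.ker ⊔ π.range = ⊤ := by
    rw [eq_top_iff]
    intro g _
    have h1 : g * (π g)⁻¹ ∈ π.ker := by
      show π (g * (π g)⁻¹) = 1
      rw [map_mul, map_inv, hidem' g, mul_inv_cancel]
    have h2 : π g ∈ π.range := MonoidHom.mem_range.mpr ⟨g, rfl⟩
    have : g = (g * (π g)⁻¹) * π g := by group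
    rw [this]
    exact Subgroup.mul_mem_sup h1 h2
  have hker_bot : π.ker = ⊥ := hpna π.ker π.range hHn hKn hHc hdisj hsup
  have hπ_inj : Function.Injective π := (MonoidHom.ker_eq_bot_iff π).mp hker_bot
  have hσ_inj : Function.Injective σ := by
    obtain ⟨m, rfl⟩ := Nat.exists_eq_succ_of_ne_zero hn0.ne'
    have : (π : G → G) = (σ ^ m : Monoid.End G) ∘ σ := by
      funext g
      show (σ ^ (m + 1)) g = (σ ^ m) (σ g)
      rw [pow_succ]
      rfl
    rw [this] at hπ_inj
    exact Function.Injective.of_comp hπ_inj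
  exact Finite.injective_iff_bijective.mp hσ_inj

end Aux

/-- For a purely non-abelian finite `p`-group `G`, the group of central automorphisms
has order `|Hom(G/γ₂(G), Z(G))|`. -/
theorem card_autcent_eq_card_hom {G : Type*} [Group G] [Fintype G] {p : ℕ}
    (hp : p.Prime) (hG : IsPGroup p G) (hpna : PurelyNonabelian G) :
    Nat.card {φ : MulAut G // ∀ g : G, g⁻¹ * φ g ∈ Subgroup.center G} =
      Nat.card ((G ⧸ commutator G) →* Subgroup.center G) := by
  -- the homomorphism attached to a central automorphism
  let fwd0 : {φ : MulAut G // ∀ g : G, g⁻¹ * φ g ∈ Subgroup.center G} →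
      (G →* Subgroup.center G) := fun φ =>
    { toFun := fun g => ⟨g⁻¹ * φ.1 g, φ.2 g⟩
      map_one' := by ext; simp
      map_mul' := fun a b => by
        ext
        show (a * b)⁻¹ * φ.1 (a * b) = (a⁻¹ * φ.1 a) * (b⁻¹ * φ.1 b)
        have hcom : b⁻¹ * (a⁻¹ * φ.1 a) = (a⁻¹ * φ.1 a) * b⁻¹ :=
          Subgroup.mem_center_iff.mp (φ.2 a) b⁻¹
        rw [map_mul, mul_inv_rev]
        calc b⁻¹ * a⁻¹ * (φ.1 a * φ.1 b) = (b⁻¹ * (a⁻¹ * φ.1 a)) * φ.1 b := by group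
          _ = ((a⁻¹ * φ.1 a) * b⁻¹) * φ.1 b := by rw [hcom]
          _ = a⁻¹ * φ.1 a * (b⁻¹ * φ.1 b) := by group }
  let fwd : {φ : MulAut G // ∀ g : G, g⁻¹ * φ g ∈ Subgroup.center G} →
      ((G ⧸ commutator G) →* Subgroup.center G) := fun φ =>
    QuotientGroup.lift (commutator G) (fwd0 φ) (open scoped IsMulCommutative in Abelianization.commutator_subset_ker (fwd0 φ))
  let bwdf : ((G ⧸ commutator G) →* Subgroup.center G) → (G →* Subgroup.center G) :=
    fun F => F.comp (QuotientGroup.mk' (commutator G))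
  have hbij : ∀ F, Function.Bijective (sigmaEnd (bwdf F)) :=
    fun F => sigmaEnd_bijective hpna (bwdf F)
  let bwd : ((G ⧸ commutator G) →* Subgroup.center G) →
      {φ : MulAut G // ∀ g : G, g⁻¹ * φ g ∈ Subgroup.center G} := fun F =>
    ⟨MulEquiv.ofBijective _ (hbij F), by
      intro g
      show g⁻¹ * sigmaEnd (bwdf F) g ∈ Subgroup.center G
      rw [sigmaEnd_apply, inv_mul_cancel_left]
      exact (bwdf F g).2⟩
  refine Nat.card_congr ⟨fwd, bwd, ?_, ?_⟩
  · intro φ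
    refine Subtype.ext (MulEquiv.toMonoidHom_injective (MonoidHom.ext fun g => ?_))
    show sigmaEnd (bwdf (fwd φ)) g = φ.1 g
    rw [sigmaEnd_apply]
    show g * ((fwd φ) (QuotientGroup.mk g) : G) = φ.1 g
    have : (fwd φ) (QuotientGroup.mk g) = fwd0 φ g := rfl
    rw [this]
    show g * (g⁻¹ * φ.1 g) = φ.1 g
    group
  · intro F
    refine MonoidHom.ext fun q => ?_
    induction q using QuotientGroup.induction_on with
    | H g =>
      show fwd0 (bwd F) g = F (QuotientGroup.mk g)
      ext
      show g⁻¹ * (bwd F).1 g = (F (QuotientGroup.mk g) : G)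
      have : (bwd F).1 g = sigmaEnd (bwdf F) g := rfl
      rw [this, sigmaEnd_apply, inv_mul_cancel_left]
      rfl
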